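/- Ground entailment of the empty clause is preserved by grounding: a set N of (possibly non-ground) clauses Herbrand-entails ⊥ (i.e., the set of all ground instances of N is unsatisfiable) if and only if N Tarski-entails ⊥ (N has no first-order model), assuming the signature contains at least one ground term of each type. -/

import Mathlib

inductive Tm (V F : Type) : Type
  | var : V → Tm V F
  | app : F → List (Tm V F) → Tm V F

def Tm.subst {V W F : Type} (σ : V → Tm W F) : Tm V F → Tm W F
  | .var x => σ x
  | .app f ts => .app f (ts.attach.map fun t => t.1.subst σ)
decreasing_by have := List.sizeOf_lt_of_mem t.2; simp [Tm.app.sizeOf_spec]; omega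

structure Interp (F : Type) where
  U : Type
  ne : Nonempty U
  fn : F → List U → U

def Tm.eval {V F} (M : Interp F) (ξ : V → M.U) : Tm V F → M.U
  | .var x => ξ x
  | .app f ts => M.fn f (ts.attach.map fun t => t.1.eval M ξ)
decreasing_by have := List.sizeOf_lt_of_mem t.2; simp [Tm.app.sizeOf_spec]; omega

structure Lit (V F : Type) where
  pos : Bool
  lhs : Tm V F
  rhs : Tm V F

def Lit.subst {V W F} (σ : V → Tm W F) (L : Lit V F) : Lit W F :=
  ⟨L.pos, L.lhs.subst σ, L.rhs.subst σ⟩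

def Lit.holds {V F} (M : Interp F) (ξ : V → M.U) (L : Lit V F) : Prop :=
  match L.pos with
  | true => L.lhs.eval M ξ = L.rhs.eval M ξ
  | false => L.lhs.eval M ξ ≠ L.rhs.eval M ξ

abbrev Clause (V F : Type) := List (Lit V F)

def Clause.holds {V F} (M : Interp F) (ξ : V → M.U) (C : Clause V F) : Prop :=
  ∃ L ∈ C, L.holds M ξ

inductive Occurs {V F : Type} (x : V) : Tm V F → Prop
  | var : Occurs x (.var x)
  | app {f ts t} : t ∈ ts → Occurs x t → Occurs x (.app f ts)

inductive Subterm {V F : Type} : Tm V F → Tm V F → Prop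
  | mem {t f ts} : t ∈ ts → Subterm t (.app f ts)
  | step {t s f ts} : Subterm t s → s ∈ ts → Subterm t (.app f ts)

def Tm.size {V F : Type} : Tm V F → Nat
  | .var _ => 1
  | .app _ ts => 1 + (ts.attach.map fun t => t.1.size).sum
decreasing_by have := List.sizeOf_lt_of_mem t.2; simp [Tm.app.sizeOf_spec]; omega

def MulLt {α : Type} (lt : α → α → Prop) (N M : Multiset α) : Prop :=
  ∃ X Y Z : Multiset α, X ≠ 0 ∧ M = Z + X ∧ N = Z + Y ∧ ∀ y ∈ Y, ∃ x ∈ X, lt y x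

theorem eval_subst {V W F : Type} (M : Interp F) (ξ : W → M.U) (θ : V → Tm W F) :
    ∀ t : Tm V F, (t.subst θ).eval M ξ = t.eval M (fun x => (θ x).eval M ξ)
  | .var x => by simp [Tm.subst, Tm.eval]
  | .app f ts => by
      rw [Tm.subst, Tm.eval, Tm.eval]
      congr 1
      simp only [List.attach_map_val, List.map_map, Function.comp_def]
      exact List.map_congr_left fun t ht => eval_subst M ξ θ t
decreasing_by have := List.sizeOf_lt_of_mem ht; simp [Tm.app.sizeOf_spec]; omega

theorem lit_subst_holds {V W F : Type} (M : Interp F) (ξ : W → M.U) (θ : V → Tm W F)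
    (L : Lit V F) :
    (L.subst θ).holds M ξ ↔ L.holds M (fun x => (θ x).eval M ξ) := by
  unfold Lit.holds Lit.subst
  cases L.pos <;> simp [eval_subst]

theorem stmt_10 {V F : Type} (N : Set (Clause V F))
    (hground : Nonempty (Tm Empty F)) :
    (¬ ∃ M : Interp F, ∀ D ∈ {D : Clause Empty F |
        ∃ C ∈ N, ∃ θ : V → Tm Empty F, D = C.map (Lit.subst θ)},
      Clause.holds M (fun e => e.elim) D)
    ↔ (¬ ∃ M : Interp F, ∀ C ∈ N, ∀ ξ : V → M.U, Clause.holds M ξ C) := by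
  rw [not_iff_not]
  constructor
  · -- ground model ⇒ model of N
    rintro ⟨M, hM⟩
    classical
    -- subuniverse of ground-definable elements
    let P : M.U → Prop := fun u => ∃ t : Tm Empty F, t.eval M (fun e => e.elim) = u
    have hfn : ∀ (f : F) (us : List {u // P u}),
        P (M.fn f (us.map Subtype.val)) := by
      intro f us
      refine ⟨.app f (us.map fun u => Classical.choose u.2), ?_⟩
      rw [Tm.eval, List.attach_map_val, List.map_map]
      congr 1
      refine List.map_congr_left fun u _ => ?_
      exact Classical.choose_spec u.2
    let M' : Interp F := ⟨{u // P u},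
      ⟨⟨(Classical.choice hground).eval M (fun e => e.elim), ⟨_, rfl⟩⟩⟩,
      fun f us => ⟨M.fn f (us.map Subtype.val), hfn f us⟩⟩
    have hval : ∀ (ξ : V → M'.U) (t : Tm V F),
        (t.eval M' ξ).val = t.eval M (fun x => (ξ x).val) := by
      intro ξ t
      induction t using Tm.eval.induct with
      | case1 x => rw [Tm.eval, Tm.eval]
      | case2 f ts ih =>
        rw [Tm.eval, Tm.eval]
        show M.fn f _ = M.fn f _
        congr 1
        rw [List.attach_map_val, List.attach_map_val, List.map_map]
        exact List.map_congr_left fun t ht => ih ⟨t, ht⟩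
    refine ⟨M', fun C hC ξ => ?_⟩
    set θ : V → Tm Empty F := fun x => Classical.choose (ξ x).2 with hθ
    have hθval : ∀ x, (θ x).eval M (fun e => e.elim) = (ξ x).val :=
      fun x => Classical.choose_spec (ξ x).2
    obtain ⟨L, hL, hLholds⟩ := hM (C.map (Lit.subst θ)) ⟨C, hC, θ, rfl⟩
    rw [List.mem_map] at hL
    obtain ⟨L0, hL0, rfl⟩ := hL
    refine ⟨L0, hL0, ?_⟩
    rw [lit_subst_holds] at hLholds
    unfold Lit.holds at hLholds ⊢
    cases h : L0.pos <;> rw [h] at hLholds <;>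
      simp only [funext hθval] at hLholds <;>
      simp only [← hval ξ L0.lhs, ← hval ξ L0.rhs] at hLholds
    · exact fun he => hLholds (congrArg Subtype.val he)
    · exact Subtype.ext hLholds
  · -- model of N ⇒ ground model
    rintro ⟨M, hM⟩
    refine ⟨M, ?_⟩
    rintro D ⟨C, hC, θ, rfl⟩
    obtain ⟨L0, hL0, hh⟩ := hM C hC (fun x => (θ x).eval M (fun e => e.elim))
    exact ⟨L0.subst θ, List.mem_map_of_mem hL0,
      (lit_subst_holds M _ θ L0).mpr hh⟩
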